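/- Given positive integers a_1,...,a_k with Σ a_i = 2B, set W = B² + B + 1, and give item i rate increase a_i/W and cost a_i. For any subset S with Σ_{i∈S} a_i = B + n for some integer n ≥ 1, the total time to buy the items of S starting from rate 1 exceeds B. -/

import Mathlib

/-- Time to buy a list of items, each given as (rate increase, cost),
starting at generation rate `G` with 0 cookies. -/
noncomputable def buyTime (G : ℝ) : List (ℝ × ℝ) → ℝ
  | [] => 0
  | (x, y) :: rest => y / G + buyTime (G + x) rest

lemma buyTime_ge (L : List (ℝ × ℝ)) : ∀ G : ℝ, 0 < G →
    (∀ p ∈ L, 0 ≤ p.1 ∧ 0 ≤ p.2) →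
    buyTime G L ≥ (L.map Prod.snd).sum / (G + (L.map Prod.fst).sum) := by
  induction L with
  | nil => intro G hG h; simp [buyTime]
  | cons p rest ih =>
    rintro G hG h
    obtain ⟨x, y⟩ := p
    have hx : 0 ≤ x := (h _ List.mem_cons_self).1
    have hy : 0 ≤ y := (h _ List.mem_cons_self).2
    have hX : 0 ≤ (rest.map Prod.fst).sum := by
      apply List.sum_nonneg
      intro z hz
      obtain ⟨q, hq, rfl⟩ := List.mem_map.1 hz
      exact (h q (List.mem_cons_of_mem _ hq)).1
    have ih' := ih (G + x) (by linarith) (fun q hq => h q (List.mem_cons_of_mem _ hq))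
    have hden : 0 < G + (x + (rest.map Prod.fst).sum) := by linarith
    have h1 : y / (G + (x + (rest.map Prod.fst).sum)) ≤ y / G := by
      apply div_le_div_of_nonneg_left hy hG
      linarith
    have h2 : buyTime (G + x) rest ≥
        (rest.map Prod.snd).sum / (G + (x + (rest.map Prod.fst).sum)) := by
      calc buyTime (G + x) rest
          ≥ (rest.map Prod.snd).sum / ((G + x) + (rest.map Prod.fst).sum) := ih'
        _ = (rest.map Prod.snd).sum / (G + (x + (rest.map Prod.fst).sum)) := by ring_nf
    simp only [buyTime, List.map_cons, List.sum_cons]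
    have heq : (y + (rest.map Prod.snd).sum) / (G + (x + (rest.map Prod.fst).sum))
        = y / (G + (x + (rest.map Prod.fst).sum))
          + (rest.map Prod.snd).sum / (G + (x + (rest.map Prod.fst).sum)) := by
      field_simp
    rw [heq]
    linarith

theorem stmt_11 (k B : ℕ) (hB : 0 < B) (a : Fin k → ℕ) (ha : ∀ i, 0 < a i)
    (hsum : ∑ i, a i = 2 * B)
    (W : ℝ) (hW : W = (B : ℝ) ^ 2 + B + 1)
    (n : ℕ) (hn : 1 ≤ n)
    (S : Finset (Fin k)) (hS : ∑ i ∈ S, a i = B + n)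
    (l : List (Fin k)) (hnd : l.Nodup) (hlS : l.toFinset = S) :
    buyTime 1 (l.map fun i => ((a i : ℝ) / W, (a i : ℝ))) > B := by
  have hWpos : 0 < W := by rw [hW]; positivity
  set L := l.map fun i => ((a i : ℝ) / W, (a i : ℝ)) with hL
  have hnonneg : ∀ p ∈ L, 0 ≤ p.1 ∧ 0 ≤ p.2 := by
    intro p hp
    obtain ⟨i, hi, rfl⟩ := List.mem_map.1 hp
    exact ⟨by positivity, by positivity⟩
  have hbd := buyTime_ge L 1 one_pos hnonneg
  have hScast : ∑ i ∈ S, (a i : ℝ) = (B : ℝ) + n := by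
    have : ((∑ i ∈ S, a i : ℕ) : ℝ) = ((B + n : ℕ) : ℝ) := by rw [hS]
    push_cast at this
    exact this
  have hsnd : (L.map Prod.snd).sum = (B : ℝ) + n := by
    rw [hL, List.map_map]
    have : ((l.map (Prod.snd ∘ fun i => ((a i : ℝ) / W, (a i : ℝ)))).sum)
        = ∑ i ∈ S, (a i : ℝ) := by
      rw [← hlS, List.sum_toFinset _ hnd]; rfl
    rw [this, hScast]
  have hfst : (L.map Prod.fst).sum = ((B : ℝ) + n) / W := by
    rw [hL, List.map_map]
    have : ((l.map (Prod.fst ∘ fun i => ((a i : ℝ) / W, (a i : ℝ)))).sum)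
        = ∑ i ∈ S, (a i : ℝ) / W := by
      rw [← hlS, List.sum_toFinset _ hnd]; rfl
    rw [this, ← Finset.sum_div, hScast]
  rw [hsnd, hfst] at hbd
  have hBn : (0:ℝ) < (B:ℝ) + n := by positivity
  have hn' : (1:ℝ) ≤ n := by exact_mod_cast hn
  have hB' : (1:ℝ) ≤ B := by exact_mod_cast hB
  have hkey : (B : ℝ) < ((B : ℝ) + n) / (1 + ((B : ℝ) + n) / W) := by
    rw [lt_div_iff₀ (by positivity), hW]
    have hd : (0:ℝ) < (B:ℝ)^2 + B + 1 := by positivity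
    have heq : (B:ℝ) * (1 + ((B:ℝ) + n) / ((B:ℝ)^2 + B + 1))
        = (B * (((B:ℝ)^2 + B + 1) + ((B:ℝ) + n))) / ((B:ℝ)^2 + B + 1) := by
      field_simp
    rw [heq, div_lt_iff₀ hd]
    nlinarith [mul_le_mul_of_nonneg_right hn' (by positivity : (0:ℝ) ≤ (B:ℝ)^2)]
  linarith
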